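/- For all real x and all y with −π < y < π, |1/(1+e^{x+iy})| ≤ 1/((1+e^x)·cos(y/2)). -/

import Mathlib

theorem stmt_3 (x y : ℝ) (hy1 : -Real.pi < y) (hy2 : y < Real.pi) :
    ‖(1 / (1 + Complex.exp (x + y * Complex.I)) : ℂ)‖ ≤
      1 / ((1 + Real.exp x) * Real.cos (y / 2)) := by
  have hc : 0 < Real.cos (y / 2) := by
    apply Real.cos_pos_of_mem_Ioo
    constructor <;> [linarith; linarith]
  have hex : 0 < Real.exp x := Real.exp_pos x
  have hpos : 0 < (1 + Real.exp x) * Real.cos (y / 2) := by positivity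
  rw [norm_div, norm_one]
  apply one_div_le_one_div_of_le hpos
  have hsq : ((1 + Real.exp x) * Real.cos (y / 2)) ^ 2 ≤
      ‖1 + Complex.exp (x + y * Complex.I)‖ ^ 2 := by
    rw [Complex.sq_norm, Complex.normSq_apply]
    simp only [Complex.add_re, Complex.add_im, Complex.one_re, Complex.one_im,
      Complex.exp_re, Complex.exp_im, Complex.add_re, Complex.mul_re, Complex.mul_im,
      Complex.I_re, Complex.I_im, Complex.ofReal_re, Complex.ofReal_im]
    ring_nf
    have hcos2 : Real.cos (y * (1/2)) ^ 2 = (1 + Real.cos y) / 2 := by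
      have h := Real.cos_sq (y * (1/2))
      rw [h, show 2 * (y * (1/2)) = y by ring]
      ring
    nlinarith [Real.sin_sq_add_cos_sq y, sq_nonneg (1 - Real.exp x),
      Real.cos_le_one y, Real.neg_one_le_cos y, sq_nonneg ((1 - Real.exp x) * Real.cos (y/2))]
  have := Real.sqrt_le_sqrt hsq
  rwa [Real.sqrt_sq hpos.le, Real.sqrt_sq (norm_nonneg _)] at this
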